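/- Let S and F be square-integrable random vectors in ℝ^d and ℝ^q with Cov(F) invertible, let η ∈ (0,1], M = Cov(S,F)Cov(F)⁻¹Cov(F,S), and Γ(γ) = Cov(S) + (γ²/η + 2γ)M. Then for every γ ∈ ℝ, Γ(γ) - Γ(-η) = (1/η)(γ + η)²·M is positive semi-definite; hence Γ(-η) ⪯ Γ(γ) in the Loewner order for all γ. -/

import Mathlib

open MeasureTheory Matrix

variable {Ω : Type*} [MeasurableSpace Ω]

/-- Componentwise mean of a random vector. -/
noncomputable def mvMean (μ : MeasureTheory.Measure Ω) {d : ℕ} (S : Ω → Fin d → ℝ) : Fin d → ℝ :=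
  fun i => ∫ ω, S ω i ∂μ

/-- Cross-covariance matrix Cov(S, F) = E[(S - E S)(F - E F)ᵀ]. -/
noncomputable def mvCov (μ : MeasureTheory.Measure Ω) {d q : ℕ}
    (S : Ω → Fin d → ℝ) (F : Ω → Fin q → ℝ) : Matrix (Fin d) (Fin q) ℝ :=
  Matrix.of fun i j => ∫ ω, (S ω i - mvMean μ S i) * (F ω j - mvMean μ F j) ∂μ

lemma mvCov_transpose (μ : Measure Ω) {d q : ℕ}
    (S : Ω → Fin d → ℝ) (F : Ω → Fin q → ℝ) :
    mvCov μ F S = (mvCov μ S F)ᵀ := by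
  ext i j
  simp only [mvCov, transpose_apply, Matrix.of_apply]
  congr 1; ext ω; ring

lemma psd_smul {n : ℕ} {c : ℝ} (hc : 0 ≤ c) {M : Matrix (Fin n) (Fin n) ℝ}
    (hM : M.PosSemidef) : (c • M).PosSemidef := by
  refine PosSemidef.of_dotProduct_mulVec_nonneg ?_ (fun x => ?_)
  · unfold Matrix.IsHermitian
    rw [conjTranspose_smul, hM.1.eq]
    simp
  · rw [smul_mulVec, dotProduct_smul, smul_eq_mul]
    exact mul_nonneg hc (hM.dotProduct_mulVec_nonneg x)

lemma l2_mul_integrable {μ : Measure Ω} [IsFiniteMeasure μ] {f h : Ω → ℝ}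
    (hf : MemLp f 2 μ) (hh : MemLp h 2 μ) : Integrable (fun ω => f ω * h ω) μ := by
  refine Integrable.mono' ((hf.integrable_sq.add hh.integrable_sq).div_const 2)
    (hf.1.mul hh.1) (Filter.Eventually.of_forall fun ω => ?_)
  simp only [Pi.add_apply]
  rw [Real.norm_eq_abs, abs_le]
  constructor <;> nlinarith [sq_nonneg (f ω + h ω), sq_nonneg (f ω - h ω)]

lemma mvCov_self_posSemidef (μ : Measure Ω) [IsProbabilityMeasure μ] {q : ℕ}
    (F : Ω → Fin q → ℝ) (hF : ∀ j, MemLp (fun ω => F ω j) 2 μ) :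
    (mvCov μ F F).PosSemidef := by
  set g : Fin q → Ω → ℝ := fun j ω => F ω j - mvMean μ F j with hg
  have hgL2 : ∀ j, MemLp (g j) 2 μ := fun j => (hF j).sub (memLp_const _)
  have hint : ∀ i j, Integrable (fun ω => g i ω * g j ω) μ := fun i j =>
    l2_mul_integrable (hgL2 i) (hgL2 j)
  refine PosSemidef.of_dotProduct_mulVec_nonneg ?_ ?_
  · unfold Matrix.IsHermitian
    ext i j
    simp only [mvCov, conjTranspose_apply, Matrix.of_apply, star_trivial]
    congr 1; ext ω; ring
  · intro x
    have hx : ∀ ω, (∑ j, x j * g j ω) ^ 2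
        = ∑ i, ∑ j, (x i * x j) * (g i ω * g j ω) := by
      intro ω
      rw [sq, Finset.sum_mul_sum]
      congr 1; ext i; congr 1; ext j; ring
    have key : x ⬝ᵥ (mvCov μ F F) *ᵥ x = ∫ ω, (∑ j, x j * g j ω) ^ 2 ∂μ := by
      simp only [dotProduct, mulVec, dotProduct, mvCov, Matrix.of_apply]
      rw [MeasureTheory.integral_congr_ae (Filter.Eventually.of_forall hx)]
      rw [integral_finset_sum _ (fun i _ =>
        integrable_finset_sum _ (fun j _ => ((hint i j).const_mul (x i * x j))))]
      congr 1; ext i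
      rw [integral_finset_sum _ (fun j _ => (hint i j).const_mul _)]
      rw [Finset.mul_sum]
      congr 1; ext j
      rw [integral_const_mul]
      ring
    simp only [star_trivial]
    rw [key]
    exact integral_nonneg fun ω => sq_nonneg _

/-- Γ(γ) - Γ(-η) = (1/η)(γ+η)²·M is positive semi-definite for every γ, where
M = Cov(S,F)Cov(F)⁻¹Cov(F,S); hence γ = -η is Loewner-optimal. -/
theorem stmt14 (μ : Measure Ω) [IsProbabilityMeasure μ] {d q : ℕ}
    (S : Ω → Fin d → ℝ) (F : Ω → Fin q → ℝ)
    (hS : ∀ i, MemLp (fun ω => S ω i) 2 μ) (hF : ∀ j, MemLp (fun ω => F ω j) 2 μ)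
    (hinv : IsUnit (mvCov μ F F))
    (η : ℝ) (hη : 0 < η) (hη1 : η ≤ 1) :
    ∀ γ : ℝ,
      ((mvCov μ S S +
          (γ ^ 2 / η + 2 * γ) • (mvCov μ S F * (mvCov μ F F)⁻¹ * mvCov μ F S)) -
        (mvCov μ S S +
          ((-η) ^ 2 / η + 2 * (-η)) • (mvCov μ S F * (mvCov μ F F)⁻¹ * mvCov μ F S)) =
        ((1 / η) * (γ + η) ^ 2) • (mvCov μ S F * (mvCov μ F F)⁻¹ * mvCov μ F S)) ∧
      ((mvCov μ S S +
          (γ ^ 2 / η + 2 * γ) • (mvCov μ S F * (mvCov μ F F)⁻¹ * mvCov μ F S)) -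
        (mvCov μ S S +
          ((-η) ^ 2 / η + 2 * (-η)) • (mvCov μ S F * (mvCov μ F F)⁻¹ * mvCov μ F S))).PosSemidef := by
  intro γ
  set M := mvCov μ S F * (mvCov μ F F)⁻¹ * mvCov μ F S with hM
  have hcoef : (γ ^ 2 / η + 2 * γ) - ((-η) ^ 2 / η + 2 * (-η)) = (1 / η) * (γ + η) ^ 2 := by
    field_simp; ring
  have heq : (mvCov μ S S + (γ ^ 2 / η + 2 * γ) • M) -
      (mvCov μ S S + ((-η) ^ 2 / η + 2 * (-η)) • M) = ((1 / η) * (γ + η) ^ 2) • M := by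
    rw [← hcoef, sub_smul]
    abel
  refine ⟨heq, ?_⟩
  rw [heq]
  have hMpsd : M.PosSemidef := by
    have hB : (mvCov μ F F).PosSemidef := mvCov_self_posSemidef μ F hF
    have hBinv : ((mvCov μ F F)⁻¹).PosSemidef := hB.inv
    have := hBinv.mul_mul_conjTranspose_same (mvCov μ S F)
    rw [hM, mvCov_transpose μ S F,
      ← Matrix.conjTranspose_eq_transpose_of_trivial (mvCov μ S F)]
    exact this
  exact psd_smul (mul_nonneg (by positivity) (sq_nonneg _)) hMpsd
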